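/- Quadratic error reduction of the Newton step under the uniqueness condition: suppose α := Mν⁻²‖f‖ < 1, let u ∈ V be a weak NSE solution, let û ∈ V satisfy ‖û‖ ≤ ν⁻¹‖f‖, and let u' ∈ V be a Newton update of û. Then ‖u − u'‖ ≤ Mν⁻¹(1−α)⁻¹ ‖u − û‖². -/

import Mathlib

open scoped RealInnerProductSpace

/-- Quadratic error reduction of the Newton step under the uniqueness
condition: if `α := Mν⁻²‖f‖ < 1`, `u` is a weak NSE solution,
`‖uhat‖ ≤ ν⁻¹‖f‖`, and `u'` is a Newton update of `uhat`, then
`‖u − u'‖ ≤ Mν⁻¹(1−α)⁻¹‖u − uhat‖²`. -/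
theorem newton_step_quadratic_error
    {V : Type*} [NormedAddCommGroup V] [InnerProductSpace ℝ V]
    (b : V →ₗ[ℝ] V →ₗ[ℝ] V →ₗ[ℝ] ℝ)
    (hskew : ∀ z w : V, b z w w = 0)
    (M : ℝ) (hM : 0 < M)
    (hbound : ∀ z w v : V, |b z w v| ≤ M * ‖z‖ * ‖w‖ * ‖v‖)
    (f : V →L[ℝ] ℝ) (ν : ℝ) (hν : 0 < ν)
    (α : ℝ) (hα : α = M * ν⁻¹ ^ 2 * ‖f‖) (hα1 : α < 1)
    (u uhat u' : V)
    (hNSE : ∀ v : V, ν * ⟪u, v⟫ + b u u v = f v)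
    (huhatstab : ‖uhat‖ ≤ ν⁻¹ * ‖f‖)
    (hNewton : ∀ v : V, ν * ⟪u', v⟫ + b uhat u' v + b u' uhat v - b uhat uhat v = f v) :
    ‖u - u'‖ ≤ M * ν⁻¹ * (1 - α)⁻¹ * ‖u - uhat‖ ^ 2 := by
  have h1 := hNSE (u - u')
  have h2 := hNewton (u - u')
  have hsk := hskew uhat (u - u')
  have key : ν * ⟪u - u', u - u'⟫
      = - b (u - uhat) (u - uhat) (u - u') - b (u - u') uhat (u - u') := by
    simp only [map_sub, LinearMap.sub_apply, inner_sub_left] at h1 h2 hsk ⊢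
    linarith
  have hinner : (⟪u - u', u - u'⟫ : ℝ) = ‖u - u'‖ ^ 2 := real_inner_self_eq_norm_sq _
  have hb1 : |b (u - uhat) (u - uhat) (u - u')| ≤ M * ‖u - uhat‖ ^ 2 * ‖u - u'‖ := by
    have h := hbound (u - uhat) (u - uhat) (u - u')
    nlinarith [norm_nonneg (u - uhat), norm_nonneg (u - u')]
  have hb2 : |b (u - u') uhat (u - u')| ≤ M * (ν⁻¹ * ‖f‖) * ‖u - u'‖ ^ 2 := by
    have h := hbound (u - u') uhat (u - u')
    nlinarith [norm_nonneg (u - u'), norm_nonneg uhat, sq_nonneg ‖u - u'‖,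
      mul_le_mul_of_nonneg_left huhatstab (mul_nonneg hM.le (norm_nonneg (u - u')))]
  have habs1 := abs_le.mp hb1
  have habs2 := abs_le.mp hb2
  have hα0 : 0 ≤ α := by rw [hα]; positivity
  have h1α : 0 < 1 - α := by linarith
  have hνα : ν * α = M * ν⁻¹ * ‖f‖ := by
    rw [hα]; field_simp
  have hmain : ν * (1 - α) * ‖u - u'‖ ^ 2 ≤ M * ‖u - uhat‖ ^ 2 * ‖u - u'‖ := by
    nlinarith [key, hinner]
  rcases eq_or_lt_of_le (norm_nonneg (u - u')) with h0 | h0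
  · rw [← h0]; positivity
  · have hνα' : 0 < ν * (1 - α) := by positivity
    have h3 : ν * (1 - α) * ‖u - u'‖ ≤ M * ‖u - uhat‖ ^ 2 := by
      refine le_of_mul_le_mul_right ?_ h0
      calc ν * (1 - α) * ‖u - u'‖ * ‖u - u'‖ = ν * (1 - α) * ‖u - u'‖ ^ 2 := by ring
        _ ≤ M * ‖u - uhat‖ ^ 2 * ‖u - u'‖ := hmain
    rw [show M * ν⁻¹ * (1 - α)⁻¹ * ‖u - uhat‖ ^ 2
        = (M * ‖u - uhat‖ ^ 2) / (ν * (1 - α)) by field_simp,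
      le_div_iff₀ hνα']
    linarith [h3]
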